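/- arXiv:1303.7227 — 2 statements merged into one kernel-verified Lean document; each statement's English description precedes it below -/
import Mathlib

section
/- Let X be a topological space, Y a topological vector space, S : X → 2^Y an upper semicontinuous correspondence with compact values, C ⊆ Y closed and K ⊆ Y compact. Then the correspondence T : X → 2^Y defined by T(x) = (S(x) + C) ∩ K is upper semicontinuous. -/
open Pointwise

/-- A correspondence `T : X → 2^Y` is upper semicontinuous if for every open `V`,
the set `{x | T x ⊆ V}` is open. -/
def UpperSemicontinuousCorr {X Y : Type*} [TopologicalSpace X] [TopologicalSpace Y]
    (T : X → Set Y) : Prop :=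
  ∀ V : Set Y, IsOpen V → IsOpen {x | T x ⊆ V}

theorem minkowski_sum_inter_compact_usc
    {X Y : Type*} [TopologicalSpace X]
    [AddCommGroup Y] [Module ℝ Y] [TopologicalSpace Y] [IsTopologicalAddGroup Y]
    [ContinuousSMul ℝ Y]
    (S : X → Set Y) (hS : UpperSemicontinuousCorr S) (hScomp : ∀ x, IsCompact (S x))
    (C K : Set Y) (hC : IsClosed C) (hK : IsCompact K) :
    UpperSemicontinuousCorr (fun x => (S x + C) ∩ K) := by
  intro V hV
  rw [isOpen_iff_mem_nhds]
  intro x hx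
  -- the "bad" set
  set F : Set Y := (K ∩ Vᶜ) + (-C) with hF
  have hKV : IsCompact (K ∩ Vᶜ) := hK.inter_right hV.isClosed_compl
  have hFclosed : IsClosed F := IsClosed.add_left_of_isCompact hC.neg hKV
  have hSF : S x ⊆ Fᶜ := by
    intro s hs hsF
    obtain ⟨k, hk, c, hc, hkc⟩ := hsF
    rw [Set.mem_neg] at hc
    have : s + (-c) ∈ (S x + C) ∩ K := by
      refine ⟨⟨s, hs, -c, hc, rfl⟩, ?_⟩
      rw [← hkc]; simpa using hk.1
    have := hx this
    rw [← hkc] at this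
    exact hk.2 (by rwa [add_neg_cancel_right] at this)
  have hU : IsOpen {y | S y ⊆ Fᶜ} := hS _ hFclosed.isOpen_compl
  have hsub : {y | S y ⊆ Fᶜ} ⊆ {x | (S x + C) ∩ K ⊆ V} := by
    intro y hy z hz
    by_contra hzV
    obtain ⟨⟨s, hs, c, hc, rfl⟩, hzK⟩ := hz
    exact hy hs ⟨s + c, ⟨hzK, hzV⟩, -c, Set.neg_mem_neg.2 hc, by module⟩
  exact Filter.mem_of_superset (hU.mem_nhds hSF) hsub
end

section
/- Let X be a topological space, E a locally convex topological vector space, Y ⊆ E nonempty, T : X → 2^Y a correspondence, and D ⊆ Y compact. Let ß be a basis of neighborhoods of 0 in E consisting of open absolutely convex symmetric sets. For each V ∈ ß define T^V : X → 2^Y by T^V(x) = (T(x) + V) ∩ D. Then for every x ∈ X, the intersection over all V ∈ ß of the graph-closure correspondences satisfies ⋂_{V ∈ ß} cl(T^V)(x) ⊆ cl(T)(x), where for a correspondence S the correspondence cl(S) is defined by cl(S)(x) = {y ∈ Y : (x,y) ∈ closure of Graph(S) in X × Y}. -/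
open Pointwise

/-- The graph-closure correspondence: `clGr T x = {y | (x,y) ∈ closure (Graph T)}`. -/
def clGr {X Y : Type*} [TopologicalSpace X] [TopologicalSpace Y]
    (T : X → Set Y) (x : X) : Set Y :=
  {y | (x, y) ∈ closure {p : X × Y | p.2 ∈ T p.1}}

theorem inter_graph_closures_subset
    {X E : Type*} [TopologicalSpace X]
    [AddCommGroup E] [Module ℝ E] [TopologicalSpace E] [IsTopologicalAddGroup E]
    [ContinuousSMul ℝ E] [LocallyConvexSpace ℝ E]
    (Y : Set E) (hY : Y.Nonempty)
    (T : X → Set E) (hTY : ∀ x, T x ⊆ Y)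
    (D : Set E) (hDY : D ⊆ Y) (hD : IsCompact D)
    (Bas : Set (Set E))
    (hbasis : (nhds (0 : E)).HasBasis (· ∈ Bas) id)
    (hBas : ∀ V ∈ Bas, IsOpen V ∧ V = -V ∧ Convex ℝ V ∧ Balanced ℝ V) :
    ∀ x : X, (⋂ V ∈ Bas, clGr (fun x' => (T x' + V) ∩ D) x) ⊆ clGr T x := by

  intro x y hy
  rw [clGr, Set.mem_setOf_eq, mem_closure_iff_nhds]
  intro U hU
  rw [nhds_prod_eq, Filter.mem_prod_iff] at hU
  obtain ⟨A, hA, B, hB, hAB⟩ := hU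
  -- find V0 ∈ Bas with y + V0 ⊆ B
  have hB0 : {v : E | y + v ∈ B} ∈ nhds (0 : E) := by
    have hc : ContinuousAt (fun v : E => y + v) 0 :=
      (continuous_const.add continuous_id).continuousAt
    exact hc.preimage_mem_nhds (by simpa using hB)
  obtain ⟨V0, hV0Bas, hV0⟩ := hbasis.mem_iff.mp hB0
  obtain ⟨W, hWopen, hW0, hWW⟩ := exists_open_nhds_zero_add_subset (hbasis.mem_of_mem hV0Bas)
  have hW : W ∈ nhds (0 : E) := hWopen.mem_nhds hW0
  obtain ⟨V', hV'Bas, hV'W⟩ := hbasis.mem_iff.mp hW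
  have h0V' : (0 : E) ∈ V' := mem_of_mem_nhds (hbasis.mem_of_mem hV'Bas)
  have hsym : V' = -V' := (hBas V' hV'Bas).2.1
  have hy' := Set.mem_iInter.mp (Set.mem_iInter.mp hy V') hV'Bas
  rw [clGr, Set.mem_setOf_eq, mem_closure_iff_nhds] at hy'
  have hyV' : ({y} + V' : Set E) ∈ nhds y := by
    have hopen : IsOpen ({y} + V' : Set E) := (hBas V' hV'Bas).1.add_left
    exact hopen.mem_nhds (by simpa using Set.add_mem_add (Set.mem_singleton y) h0V')
  obtain ⟨⟨x', y'⟩, ⟨hxA, hyB⟩, hgr⟩ :=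
    hy' (A ×ˢ ({y} + V')) (by rw [nhds_prod_eq]; exact Filter.prod_mem_prod hA hyV')
  obtain ⟨⟨t, htT, v, hv, rfl⟩, -⟩ := hgr
  obtain ⟨yy, hyy, w, hw, hyw⟩ := hyB
  rw [Set.mem_singleton_iff] at hyy
  subst hyy
  have htB : t ∈ B := by
    have h1 : yy + w = t + v := hyw
    have hveq : t = yy + (w + -v) := by
      have h2 : t = (yy + w) - v := by rw [h1]; abel
      rw [h2]; abel
    rw [hveq]
    apply hV0
    exact hWW (Set.add_mem_add (hV'W hw) (hV'W (by rw [hsym]; exact Set.neg_mem_neg.mpr hv)))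
  exact ⟨(x', t), hAB ⟨hxA, htB⟩, htT⟩
end
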